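/- Let H be a real Hilbert space and F : H → ℝ. Suppose F is ρ-weakly convex, i.e., x ↦ F(x) + (ρ/2)‖x‖² is convex, and let β > ρ > 0. Then for any a, b ∈ H, if x_a uniquely minimizes x ↦ F(x) + (β/2)‖x − a‖² and x_b uniquely minimizes x ↦ F(x) + (β/2)‖x − b‖², then ‖x_a − x_b‖ ≤ (β/(β − ρ)) ‖a − b‖. -/
import Mathlib

open RealInnerProductSpace

/-- Key variational inequality: if `x` minimizes `F + (β/2)‖·-a‖²` and
`F + (ρ/2)‖·‖²` is convex, then for any `y`,
`G x ≤ G y + β⟪x-a, y-x⟫ - ρ⟪x, y-x⟫` where `G = F + (ρ/2)‖·‖²`. -/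
lemma prox_key {H : Type*} [NormedAddCommGroup H] [InnerProductSpace ℝ H]
    (F : H → ℝ) (ρ β : ℝ) (hβρ : ρ < β)
    (hweak : ConvexOn ℝ Set.univ (fun x => F x + ρ / 2 * ‖x‖ ^ 2))
    (a x : H) (hx : ∀ y : H, F x + β / 2 * ‖x - a‖ ^ 2 ≤ F y + β / 2 * ‖y - a‖ ^ 2)
    (y : H) :
    F x + ρ / 2 * ‖x‖ ^ 2 ≤ F y + ρ / 2 * ‖y‖ ^ 2
      + (β * ⟪x - a, y - x⟫ - ρ * ⟪x, y - x⟫) := by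
  set L : ℝ := β * ⟪x - a, y - x⟫ - ρ * ⟪x, y - x⟫ with hL
  set M : ℝ := (β - ρ) / 2 * ‖y - x‖ ^ 2 with hM
  have hMnn : 0 ≤ M := mul_nonneg (by linarith) (by positivity)
  have hmain : ∀ t : ℝ, 0 < t → t ≤ 1 →
      F x + ρ / 2 * ‖x‖ ^ 2 ≤ F y + ρ / 2 * ‖y‖ ^ 2 + L + t * M := by
    intro t ht ht1
    set z : H := x + t • (y - x) with hz
    have hzc : z = (1 - t) • x + t • y := by
      rw [hz]; module
    have hconv := hweak.2 (Set.mem_univ x) (Set.mem_univ y)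
      (by linarith : (0:ℝ) ≤ 1 - t) (le_of_lt ht) (by ring)
    rw [← hzc] at hconv
    simp only [] at hconv
    have hopt := hx z
    -- norm expansions
    have hza : ‖z - a‖ ^ 2 = ‖x - a‖ ^ 2 + 2 * t * ⟪x - a, y - x⟫ + t ^ 2 * ‖y - x‖ ^ 2 := by
      have : z - a = (x - a) + t • (y - x) := by rw [hz]; abel
      rw [this, norm_add_sq_real, real_inner_smul_right, norm_smul]
      simp [abs_of_pos ht, mul_pow]
      ring
    have hzn : ‖z‖ ^ 2 = ‖x‖ ^ 2 + 2 * t * ⟪x, y - x⟫ + t ^ 2 * ‖y - x‖ ^ 2 := by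
      rw [hz, norm_add_sq_real, real_inner_smul_right, norm_smul]
      simp [abs_of_pos ht, mul_pow]
      ring
    -- combine: F x + β/2‖x-a‖² ≤ F z + β/2‖z-a‖², and
    -- F z ≤ (1-t)(F x + ρ/2‖x‖²) + t(F y + ρ/2‖y‖²) - ρ/2‖z‖²
    have hcomb : F x + β / 2 * ‖x - a‖ ^ 2 ≤
        (1 - t) * (F x + ρ / 2 * ‖x‖ ^ 2) + t * (F y + ρ / 2 * ‖y‖ ^ 2)
          - ρ / 2 * ‖z‖ ^ 2 + β / 2 * ‖z - a‖ ^ 2 := by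
      simp only [smul_eq_mul] at hconv
      linarith [hopt, hconv]
    rw [hza, hzn] at hcomb
    have ht' : (0:ℝ) < t := ht
    rw [hL, hM]
    nlinarith [hcomb, mul_pos ht' ht']
  -- take t → 0
  have : F x + ρ / 2 * ‖x‖ ^ 2 ≤ F y + ρ / 2 * ‖y‖ ^ 2 + L := by
    apply le_of_forall_pos_le_add
    intro ε hε
    have hMp : 0 < M + 1 := by linarith
    set t : ℝ := min 1 (ε / (M + 1)) with htdef
    have ht0 : 0 < t := lt_min one_pos (by positivity)
    have ht1 : t ≤ 1 := min_le_left _ _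
    have htM : t * M ≤ ε := by
      have h1 : t ≤ ε / (M + 1) := min_le_right _ _
      have : t * M ≤ (ε / (M + 1)) * M := by nlinarith
      have h2 : (ε / (M + 1)) * M ≤ ε := by
        rw [div_mul_eq_mul_div, div_le_iff₀ hMp]; nlinarith
      linarith
    have := hmain t ht0 ht1
    linarith
  linarith

/-- If F is ρ-weakly convex and β > ρ > 0, the proximal map with
parameter β is (β/(β−ρ))-Lipschitz. -/
theorem trace_weakly_convex_prox_lipschitz
    {H : Type*} [NormedAddCommGroup H] [InnerProductSpace ℝ H] [CompleteSpace H]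
    (F : H → ℝ) (ρ β : ℝ) (hρ : 0 < ρ) (hβρ : ρ < β)
    (hweak : ConvexOn ℝ Set.univ (fun x => F x + ρ / 2 * ‖x‖ ^ 2))
    (a b xa xb : H)
    (hxa : ∀ y : H, F xa + β / 2 * ‖xa - a‖ ^ 2 ≤ F y + β / 2 * ‖y - a‖ ^ 2)
    (hxa_uniq : ∀ y : H, (∀ z : H, F y + β / 2 * ‖y - a‖ ^ 2 ≤ F z + β / 2 * ‖z - a‖ ^ 2) → y = xa)
    (hxb : ∀ y : H, F xb + β / 2 * ‖xb - b‖ ^ 2 ≤ F y + β / 2 * ‖y - b‖ ^ 2)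
    (hxb_uniq : ∀ y : H, (∀ z : H, F y + β / 2 * ‖y - b‖ ^ 2 ≤ F z + β / 2 * ‖z - b‖ ^ 2) → y = xb) :
    ‖xa - xb‖ ≤ β / (β - ρ) * ‖a - b‖ := by
  have h1 := prox_key F ρ β hβρ hweak a xa hxa xb
  have h2 := prox_key F ρ β hβρ hweak b xb hxb xa
  set w : H := xa - xb with hw
  -- inner product identities
  have e1 : ⟪xa - a, xb - xa⟫ + ⟪xb - b, xa - xb⟫ = -‖w‖ ^ 2 + ⟪a - b, w⟫ := by
    have h : (⟪xa - a, xb - xa⟫ : ℝ) + ⟪xb - b, xa - xb⟫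
        = ⟪(a - b) - w, w⟫ := by
      rw [hw]
      simp only [inner_sub_left, inner_sub_right]
      ring
    rw [h, inner_sub_left, real_inner_self_eq_norm_sq]
    ring
  have e2 : (⟪xa, xb - xa⟫ : ℝ) + ⟪xb, xa - xb⟫ = -‖w‖ ^ 2 := by
    have h : (⟪xa, xb - xa⟫ : ℝ) + ⟪xb, xa - xb⟫ = ⟪-w, w⟫ := by
      rw [hw]
      simp only [inner_sub_left, inner_sub_right, inner_neg_left]
      ring
    rw [h, inner_neg_left, real_inner_self_eq_norm_sq]
  have key : (β - ρ) * ‖w‖ ^ 2 ≤ β * ⟪a - b, w⟫ := by nlinarith [h1, h2, e1, e2]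
  have hcs : (⟪a - b, w⟫ : ℝ) ≤ ‖a - b‖ * ‖w‖ := real_inner_le_norm _ _
  have hβρ' : 0 < β - ρ := by linarith
  rcases eq_or_lt_of_le (norm_nonneg w) with h0 | h0
  · rw [← h0]
    exact mul_nonneg (div_nonneg (by linarith) (le_of_lt hβρ')) (norm_nonneg _)
  · rw [div_mul_eq_mul_div, le_div_iff₀ hβρ']
    nlinarith [key, hcs, h0]
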